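/- Let g(w) = (1/2)·w²·e^{-w}·1{w>0}, and let P_θ be the probability measure on ℝ×{−1,+1} with density f_θ(y,z) = g(y−θ)·1{z=+1} + g(θ−y)·1{z=−1} with respect to λ = 𝔪 ⊗ ν (𝔪 Lebesgue, ν uniform on {−1,+1}). Then for every θ ∈ ℝ and every t > 0, the part of P_{θ+t} that is singular with respect to P_θ has total mass P_{θ+t}({x : f_θ(x) = 0}) = (1/2)∫_0^t g(u) du ≤ t³/12; in particular this singular mass is O(|t|³) (and hence o(|t|²)) as t → 0. -/

import Mathlib

open MeasureTheory Real Set Filter Asymptotics Topology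

/- We model the two-point space `{−1,+1}` by `Bool`, with `true ↔ +1` and `false ↔ −1`. -/

/-- The density `g(w) = (1/2) w² e^{-w} 1{w>0}`. -/
noncomputable def g (w : ℝ) : ℝ := if 0 < w then (1/2) * w^2 * Real.exp (-w) else 0


lemma g_nonneg (w : ℝ) : 0 ≤ g w := by
  unfold g; split
  · positivity
  · exact le_refl 0
  
lemma measurable_g : Measurable g := by
  unfold g
  exact Measurable.ite (measurableSet_lt measurable_const measurable_id)
    (by fun_prop) measurable_const

lemma g_eq_zero {w : ℝ} (h : w ≤ 0) : g w = 0 := by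
  unfold g; rw [if_neg (not_lt.2 h)]

lemma g_eq_zero_iff {w : ℝ} : g w = 0 ↔ w ≤ 0 := by
  constructor
  · intro h
    by_contra hw
    push_neg at hw
    unfold g at h
    rw [if_pos hw] at h
    nlinarith [Real.exp_pos (-w), sq_nonneg w, mul_pos (mul_pos (by norm_num : (0:ℝ) < 1/2) (pow_pos hw 2)) (Real.exp_pos (-w))]
  · exact g_eq_zero

lemma integrableOn_g (s : ℝ) : IntegrableOn g (Ioc 0 s) := by
  have hc : Continuous (fun u : ℝ => (1/2) * u^2 * Real.exp (-u)) := by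
    exact (continuous_const.mul (continuous_pow 2)).mul (Real.continuous_exp.comp continuous_neg)
  have h : IntegrableOn (fun u : ℝ => (1/2) * u^2 * Real.exp (-u)) (Ioc 0 s) volume := hc.integrableOn_Ioc
  exact h.congr_fun (fun u hu => by unfold g; rw [if_pos hu.1]) measurableSet_Ioc

lemma lint_Iic {s : ℝ} (hs : 0 ≤ s) :
    ∫⁻ u in Iic s, ENNReal.ofReal (g u) = ENNReal.ofReal (∫ u in (0:ℝ)..s, g u) := by
  have hsplit : Iic s = Iic 0 ∪ Ioc 0 s := (Iic_union_Ioc_eq_Iic hs).symm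
  rw [hsplit, lintegral_union measurableSet_Ioc (Iic_disjoint_Ioc le_rfl)]
  have h0 : ∫⁻ u in Iic 0, ENNReal.ofReal (g u) = 0 := by
    rw [setLIntegral_congr_fun measurableSet_Iic
      (fun ⦃u⦄ (hu : u ≤ 0) => by rw [g_eq_zero hu, ENNReal.ofReal_zero])]
    simp
  rw [h0, zero_add, ← ofReal_integral_eq_lintegral_ofReal (integrableOn_g s)
    (ae_of_all _ fun u => g_nonneg u), intervalIntegral.integral_of_le hs]

lemma integral_g_nonneg {s : ℝ} (hs : 0 ≤ s) : 0 ≤ ∫ u in (0:ℝ)..s, g u :=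
  intervalIntegral.integral_nonneg hs (fun u _ => g_nonneg u)

lemma integral_g_bound {s : ℝ} (hs : 0 ≤ s) : (1/2) * ∫ u in (0:ℝ)..s, g u ≤ s^3 / 12 := by
  have hig : IntervalIntegrable g volume 0 s :=
    (intervalIntegrable_iff_integrableOn_Ioc_of_le hs).2 (integrableOn_g s)
  have hih : IntervalIntegrable (fun u : ℝ => u^2/2) volume 0 s := by
    apply Continuous.intervalIntegrable; fun_prop
  have hmono : ∫ u in (0:ℝ)..s, g u ≤ ∫ u in (0:ℝ)..s, u^2/2 := by
    refine intervalIntegral.integral_mono_on hs hig hih (fun u hu => ?_)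
    unfold g; split
    · have : Real.exp (-u) ≤ 1 := Real.exp_le_one_iff.2 (by linarith [hu.1])
      nlinarith [sq_nonneg u]
    · positivity
  have hval : ∫ u in (0:ℝ)..s, u^2/2 = s^3/6 := by
    rw [intervalIntegral.integral_div, integral_pow]
    ring
  rw [hval] at hmono; linarith


/-- The uniform probability measure `ν` on `{−1,+1}` (mass `1/2` at each point). -/
noncomputable def ν : Measure Bool :=
  (1/2 : ENNReal) • Measure.dirac true + (1/2 : ENNReal) • Measure.dirac false

instance : IsProbabilityMeasure ν := by
  constructor
  simp [ν]
  rw [ENNReal.inv_two_add_inv_two]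

/-- The dominating measure `λ = 𝔪 ⊗ ν` on `ℝ × {−1,+1}`. -/
noncomputable def lam : Measure (ℝ × Bool) := (volume : Measure ℝ).prod ν

/-- The density `f_θ(y,z) = g(y−θ) 1{z=+1} + g(θ−y) 1{z=−1}`. -/
noncomputable def f (θ : ℝ) (x : ℝ × Bool) : ℝ :=
  if x.2 then g (x.1 - θ) else g (θ - x.1)

/-- The probability measure `P_θ` with density `f_θ` with respect to `λ`. -/
noncomputable def P (θ : ℝ) : Measure (ℝ × Bool) :=
  lam.withDensity fun x => ENNReal.ofReal (f θ x)

lemma measurable_f (θ : ℝ) : Measurable (f θ) := by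
  unfold f
  refine Measurable.ite ?_ ?_ ?_
  · exact measurable_snd (measurableSet_singleton true)
  · exact measurable_g.comp (measurable_fst.sub measurable_const)
  · exact measurable_g.comp (measurable_const.sub measurable_fst)

lemma key (θ t : ℝ) :
    P (θ + t) {x : ℝ × Bool | f θ x = 0}
      = ENNReal.ofReal ((1/2) * ∫ u in (0:ℝ)..|t|, g u) := by
  set S := {x : ℝ × Bool | f θ x = 0} with hSdef
  have hS : MeasurableSet S := (measurable_f θ) (measurableSet_singleton 0)
  set F : ℝ × Bool → ENNReal := S.indicator (fun x => ENNReal.ofReal (f (θ + t) x)) with hF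
  have hFm : Measurable F :=
    (measurable_f (θ + t)).ennreal_ofReal.indicator hS
  have h1 : P (θ + t) S = ∫⁻ x, F x ∂lam := by
    rw [P, withDensity_apply _ hS, hF, lintegral_indicator hS _]
  rw [h1, lam, MeasureTheory.lintegral_prod _ hFm.aemeasurable]
  have hν : ∀ G : Bool → ENNReal, ∫⁻ b, G b ∂ν = 2⁻¹ * G true + 2⁻¹ * G false := by
    intro G
    simp [ν, lintegral_add_measure, lintegral_smul_measure, lintegral_dirac]
  simp only [hν]
  have hmemT : ∀ y, ((y, true) ∈ S) ↔ y ≤ θ := by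
    intro y; simp [hSdef, f, g_eq_zero_iff, sub_nonpos]
  have hmemF : ∀ y, ((y, false) ∈ S) ↔ θ ≤ y := by
    intro y; simp [hSdef, f, g_eq_zero_iff, sub_nonpos]
  rcases le_or_gt 0 t with ht | ht
  · -- t ≥ 0
    have habs : |t| = t := abs_of_nonneg ht
    have hFt : ∀ y, F (y, true) = 0 := by
      intro y
      rw [hF, Set.indicator_apply]
      split
      · next h =>
        have hy : y ≤ θ := (hmemT y).1 h
        have : f (θ + t) (y, true) = 0 := by
          simp only [f, if_pos]
          exact g_eq_zero (by linarith)
        rw [this, ENNReal.ofReal_zero]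
      · rfl
    have hFf : ∀ y, F (y, false) =
        (Iic t).indicator (fun u => ENNReal.ofReal (g u)) (θ + t - y) := by
      intro y
      rw [hF, Set.indicator_apply, Set.indicator_apply]
      have : ((y, false) ∈ S) ↔ (θ + t - y ∈ Iic t) := by
        rw [hmemF, mem_Iic]; constructor <;> intro h <;> linarith
      by_cases h : (y, false) ∈ S
      · rw [if_pos h, if_pos (this.1 h)]
        simp [f]
      · rw [if_neg h, if_neg (fun hc => h (this.2 hc))]
    simp only [hFt, hFf, mul_zero, zero_add]
    have hG : Measurable ((Iic t).indicator (fun u => ENNReal.ofReal (g u))) :=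
      (measurable_g.ennreal_ofReal).indicator measurableSet_Iic
    rw [lintegral_const_mul _ (show Measurable fun y : ℝ => (Iic t).indicator (fun u => ENNReal.ofReal (g u)) (θ + t - y) from hG.comp (measurable_const.sub measurable_id))]
    have hmp : MeasurePreserving (fun y : ℝ => θ + t - y) volume volume :=
      Measure.measurePreserving_sub_left volume (θ + t)
    rw [hmp.lintegral_comp hG, lintegral_indicator measurableSet_Iic _,
      lint_Iic (habs ▸ abs_nonneg t), habs]
    rw [ENNReal.ofReal_mul (by norm_num : (0:ℝ) ≤ 1/2)]
    congr 1
    rw [show (1/2 : ℝ) = (2:ℝ)⁻¹ by norm_num, ENNReal.ofReal_inv_of_pos two_pos,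
      ENNReal.ofReal_ofNat]
  · -- t < 0
    have habs : |t| = -t := abs_of_neg ht
    have hFf : ∀ y, F (y, false) = 0 := by
      intro y
      rw [hF, Set.indicator_apply]
      split
      · next h =>
        have hy : θ ≤ y := (hmemF y).1 h
        have : f (θ + t) (y, false) = 0 := by
          simp only [f, if_neg]
          exact g_eq_zero (by linarith)
        rw [this, ENNReal.ofReal_zero]
      · rfl
    have hFt : ∀ y, F (y, true) =
        (Iic (-t)).indicator (fun u => ENNReal.ofReal (g u)) (y - (θ + t)) := by
      intro y
      rw [hF, Set.indicator_apply, Set.indicator_apply]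
      have : ((y, true) ∈ S) ↔ (y - (θ + t) ∈ Iic (-t)) := by
        rw [hmemT, mem_Iic]; constructor <;> intro h <;> linarith
      by_cases h : (y, true) ∈ S
      · rw [if_pos h, if_pos (this.1 h)]
        simp [f]
      · rw [if_neg h, if_neg (fun hc => h (this.2 hc))]
    simp only [hFt, hFf, mul_zero, add_zero]
    have hG : Measurable ((Iic (-t)).indicator (fun u => ENNReal.ofReal (g u))) :=
      (measurable_g.ennreal_ofReal).indicator measurableSet_Iic
    rw [lintegral_const_mul _ (show Measurable fun y : ℝ => (Iic (-t)).indicator (fun u => ENNReal.ofReal (g u)) (y - (θ + t)) from hG.comp (measurable_id.sub measurable_const))]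
    have hmp : MeasurePreserving (fun y : ℝ => y - (θ + t)) volume volume :=
      measurePreserving_sub_right volume (θ + t)
    rw [hmp.lintegral_comp hG, lintegral_indicator measurableSet_Iic _,
      lint_Iic (by linarith : (0:ℝ) ≤ -t), habs]
    rw [ENNReal.ofReal_mul (by norm_num : (0:ℝ) ≤ 1/2)]
    congr 1
    rw [show (1/2 : ℝ) = (2:ℝ)⁻¹ by norm_num, ENNReal.ofReal_inv_of_pos two_pos,
      ENNReal.ofReal_ofNat]

/-- for every `θ` and every `t > 0`, the part of `P_{θ+t}` singular with
respect to `P_θ` has total mass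
`P_{θ+t}({x : f_θ(x) = 0}) = (1/2)∫_0^t g(u) du ≤ t³/12`; in particular this singular
mass is `O(|t|³)` (hence `o(|t|²)`) as `t → 0`. -/
theorem stmt7 (θ : ℝ) :
    (∀ t : ℝ, 0 < t →
      P (θ + t) {x : ℝ × Bool | f θ x = 0}
          = ENNReal.ofReal ((1/2) * ∫ u in (0:ℝ)..t, g u) ∧
        (1/2) * (∫ u in (0:ℝ)..t, g u) ≤ t^3 / 12) ∧
    (fun t : ℝ => (P (θ + t) {x : ℝ × Bool | f θ x = 0}).toReal)
      =O[𝓝 0] fun t : ℝ => |t|^3 := by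
  constructor
  · intro t ht
    exact ⟨by rw [key θ t, abs_of_pos ht], integral_g_bound ht.le⟩
  · rw [Asymptotics.isBigO_iff]
    refine ⟨1/12, Filter.Eventually.of_forall fun t => ?_⟩
    have h0 : 0 ≤ (1/2) * ∫ u in (0:ℝ)..|t|, g u := by
      have := integral_g_nonneg (abs_nonneg t); linarith
    have hb := integral_g_bound (abs_nonneg t)
    rw [key θ t, ENNReal.toReal_ofReal h0, Real.norm_eq_abs, abs_of_nonneg h0,
      Real.norm_eq_abs, abs_of_nonneg (by positivity : (0:ℝ) ≤ |t|^3)]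
    linarith
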